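/- Let m > p ≥ 1, let U be an open neighborhood of 0 in ℝ^m (with its Euclidean inner product), and let G : U → ℝ^p be real-analytic with G(0) = 0. Assume Sing G ∩ U ⊆ G^{-1}(0). Define the Milnor set M(G) := {x ∈ U : the Fréchet derivative DG(x) is surjective and x belongs to the orthogonal complement of ker DG(x) in ℝ^m}. Assume G is tame: there exists ρ₀ > 0 such that closure(M(G) \ G^{-1}(0)) ∩ G^{-1}(0) ∩ B_{ρ₀} ⊆ {0}. Then the image of G is well-defined as a set germ at the origin: there exists ε₀ > 0 such that for all ε, ε' ∈ (0, ε₀) there exists δ > 0 with G(U ∩ B_ε) ∩ B_δ = G(U ∩ B_ε') ∩ B_δ. -/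

import Mathlib

open Metric Function Topology

/-- Tame implies nice: if `Sing G ⊆ G⁻¹(0)` and the Milnor set `M(G)` of
`ρ`-nonregular points satisfies `closure(M(G) \ G⁻¹(0)) ∩ G⁻¹(0) ⊆ {0}` near the
origin, then the image of `G` is well-defined as a set germ at the origin. -/
theorem stmt_11 (m p : ℕ) (hp : 1 ≤ p) (hmp : p < m)
    (U : Set (EuclideanSpace ℝ (Fin m))) (hU : IsOpen U)
    (h0U : (0 : EuclideanSpace ℝ (Fin m)) ∈ U)
    (G : EuclideanSpace ℝ (Fin m) → EuclideanSpace ℝ (Fin p))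
    (hG : AnalyticOnNhd ℝ G U) (hG0 : G 0 = 0)
    (hsing : {x ∈ U | ¬ Function.Surjective (fderiv ℝ G x)} ⊆ {x | G x = 0})
    (htame : ∃ ρ₀ > 0,
      closure ({x ∈ U | Function.Surjective (fderiv ℝ G x) ∧
            x ∈ (LinearMap.ker (fderiv ℝ G x).toLinearMap)ᗮ} \ {x | G x = 0})
        ∩ {x | G x = 0} ∩ ball 0 ρ₀ ⊆ {0}) :
    ∃ ε₀ > 0, ∀ ε ε', 0 < ε → ε < ε₀ → 0 < ε' → ε' < ε₀ → ∃ δ > 0,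
      G '' (U ∩ ball 0 ε) ∩ ball (0 : EuclideanSpace ℝ (Fin p)) δ =
      G '' (U ∩ ball 0 ε') ∩ ball (0 : EuclideanSpace ℝ (Fin p)) δ := by
  classical
  obtain ⟨ρ₀, hρ₀, htame⟩ := htame
  obtain ⟨r, hr, hrU⟩ : ∃ r > 0, closedBall (0 : EuclideanSpace ℝ (Fin m)) r ⊆ U := by
    rcases Metric.isOpen_iff.1 hU 0 h0U with ⟨r, hr, hrU⟩
    exact ⟨r / 2, by positivity, (closedBall_subset_ball (by linarith)).trans hrU⟩
  set ε₀ : ℝ := min r ρ₀ / 2 with hε₀def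
  have hε₀pos : 0 < ε₀ := by positivity
  have hε₀r : ε₀ ≤ r := by
    have := min_le_left r ρ₀; simp only [hε₀def]; linarith
  have hε₀ρ : ε₀ < ρ₀ := by
    have := min_le_right r ρ₀; simp only [hε₀def]; linarith
  have hcbU : closedBall (0 : EuclideanSpace ℝ (Fin m)) ε₀ ⊆ U :=
    (closedBall_subset_closedBall hε₀r).trans hrU
  set S : Set (EuclideanSpace ℝ (Fin m)) :=
    {x ∈ U | Function.Surjective (fderiv ℝ G x) ∧
        x ∈ (LinearMap.ker (fderiv ℝ G x).toLinearMap)ᗮ} \ {x | G x = 0} with hSdef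
  -- Key claim: near origin, values attained in ball ε₀ are attained in ball ε.
  have claim : ∀ ε : ℝ, 0 < ε → ε < ε₀ → ∃ δ > 0,
      ∀ y : EuclideanSpace ℝ (Fin p), y ∈ ball (0 : EuclideanSpace ℝ (Fin p)) δ →
        y ∈ G '' (U ∩ ball 0 ε₀) → y ∈ G '' (U ∩ ball 0 ε) := by
    intro ε hε hεε₀
    by_contra hcon
    push_neg at hcon
    -- For each k, find a minimizer of the norm on a fibre, lying in the Milnor set.
    have key : ∀ k : ℕ, ∃ z : EuclideanSpace ℝ (Fin m),
        z ∈ closedBall (0 : EuclideanSpace ℝ (Fin m)) ε₀ ∧ ε ≤ ‖z‖ ∧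
          ‖G z‖ < 1 / (k + 1) ∧ z ∈ S := by
      intro k
      obtain ⟨y, hyball, hyim, hynotim⟩ := hcon (1 / (k + 1)) (by positivity)
      obtain ⟨x, ⟨hxU, hxball⟩, hxy⟩ := hyim
      -- y ≠ 0
      have hy0 : y ≠ 0 := by
        intro h0
        exact hynotim ⟨0, ⟨h0U, mem_ball_self hε⟩, by rw [hG0, h0]⟩
      -- the fibre piece is compact and nonempty
      have hcont : ContinuousOn G (closedBall (0 : EuclideanSpace ℝ (Fin m)) ε₀) :=
        fun x hx => (hG x (hcbU hx)).continuousAt.continuousWithinAt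
      set K : Set (EuclideanSpace ℝ (Fin m)) :=
        closedBall (0 : EuclideanSpace ℝ (Fin m)) ε₀ ∩ G ⁻¹' {y} with hKdef
      have hKclosed : IsClosed K :=
        hcont.preimage_isClosed_of_isClosed isClosed_closedBall isClosed_singleton
      have hKcompact : IsCompact K :=
        (isCompact_closedBall _ _).of_isClosed_subset hKclosed Set.inter_subset_left
      have hxK : x ∈ K := ⟨ball_subset_closedBall hxball, by simpa using hxy⟩
      obtain ⟨z, hzK, hzmin⟩ := hKcompact.exists_isMinOn ⟨x, hxK⟩ continuous_norm.continuousOn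
      obtain ⟨hzcb, hzfib⟩ := hzK
      have hGz : G z = y := hzfib
      have hzU : z ∈ U := hcbU hzcb
      -- z is in the open ball of radius ε₀
      have hzlt : ‖z‖ < ε₀ := by
        have h1 : ‖z‖ ≤ ‖x‖ := hzmin hxK
        have h2 : ‖x‖ < ε₀ := by simpa [dist_zero_right] using hxball
        linarith
      -- ε ≤ ‖z‖
      have hzge : ε ≤ ‖z‖ := by
        by_contra hlt
        push_neg at hlt
        exact hynotim ⟨z, ⟨hzU, by simpa [dist_zero_right] using hlt⟩, hGz⟩
      -- the derivative is surjective at z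
      have hsurj : Function.Surjective (fderiv ℝ G z) := by
        by_contra hns
        exact hy0 (hGz ▸ hsing ⟨hzU, hns⟩)
      -- Lagrange multipliers: z is orthogonal to the kernel
      have horth : z ∈ (LinearMap.ker (fderiv ℝ G z).toLinearMap)ᗮ := by
        have hG' : HasStrictFDerivAt G (fderiv ℝ G z) z := (hG z hzU).hasStrictFDerivAt
        have hφ' : HasStrictFDerivAt (fun t : EuclideanSpace ℝ (Fin m) =>
            (inner ℝ t t : ℝ))
            ((fderivInnerCLM ℝ (z, z)).comp
              ((ContinuousLinearMap.id ℝ _).prod (ContinuousLinearMap.id ℝ _))) z :=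
          (hasStrictFDerivAt_id z).inner ℝ (hasStrictFDerivAt_id z)
        have hextr : IsLocalExtrOn (fun t : EuclideanSpace ℝ (Fin m) => (inner ℝ t t : ℝ))
            {x | G x = G z} z := by
          left
          have hball : ball (0 : EuclideanSpace ℝ (Fin m)) ε₀ ∈ 𝓝 z :=
            isOpen_ball.mem_nhds (mem_ball_zero_iff.2 hzlt)
          filter_upwards [nhdsWithin_le_nhds hball, eventually_mem_nhdsWithin] with w hw hwfib
          have hwK : w ∈ K := ⟨ball_subset_closedBall hw, by
            simp only [Set.mem_preimage, Set.mem_singleton_iff]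
            rw [show G w = G z from hwfib, hGz]⟩
          have hnorm : ‖z‖ ≤ ‖w‖ := hzmin hwK
          simp only [real_inner_self_eq_norm_sq]
          exact pow_le_pow_left₀ (norm_nonneg z) hnorm 2
        obtain ⟨Λ, Λ₀, hne, hall⟩ :=
          hextr.exists_linear_map_of_hasStrictFDerivAt hG' hφ'
        have hΛ₀ : Λ₀ ≠ 0 := by
          intro h0
          apply hne
          have hΛ : Λ = 0 := by
            apply LinearMap.ext
            intro w
            obtain ⟨v, hv⟩ := hsurj w
            have := hall v
            rw [h0, zero_smul, add_zero, hv] at this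
            simpa using this
          simp [hΛ, h0, Prod.ext_iff]
        rw [Submodule.mem_orthogonal]
        intro v hv
        have hvz : fderiv ℝ G z v = 0 := hv
        have := hall v
        rw [hvz, map_zero, zero_add, smul_eq_mul] at this
        have hD : ((fderivInnerCLM ℝ (z, z)).comp
            ((ContinuousLinearMap.id ℝ _).prod (ContinuousLinearMap.id ℝ _))) v =
            (inner ℝ z v : ℝ) + (inner ℝ v z : ℝ) := by
          simp [fderivInnerCLM_apply]
        rw [hD] at this
        rcases mul_eq_zero.1 this with h | h
        · exact absurd h hΛ₀
        · have hcomm : (inner ℝ v z : ℝ) = inner ℝ z v := real_inner_comm z v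
          linarith
      refine ⟨z, hzcb, hzge, ?_, ⟨⟨hzU, hsurj, horth⟩, ?_⟩⟩
      · rw [hGz]; simpa [dist_zero_right] using hyball
      · simp only [Set.mem_setOf_eq, hGz]; exact hy0
    choose z hz1 hz2 hz3 hz4 using key
    -- extract a convergent subsequence
    obtain ⟨w, hwcb, φ, hφmono, htend⟩ := (isCompact_closedBall
      (0 : EuclideanSpace ℝ (Fin m)) ε₀).tendsto_subseq hz1
    have hwclos : w ∈ closure S :=
      mem_closure_of_tendsto htend (Filter.Eventually.of_forall fun k => hz4 (φ k))
    have hGw : G w = 0 := by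
      have hcont : Filter.Tendsto (fun k => G (z (φ k))) Filter.atTop (𝓝 (G w)) :=
        ((hG w (hcbU hwcb)).continuousAt.tendsto).comp htend
      have hzero : Filter.Tendsto (fun k => G (z (φ k))) Filter.atTop (𝓝 0) := by
        apply squeeze_zero_norm (fun k => le_of_lt (hz3 (φ k)))
        have h1 : Filter.Tendsto (fun k : ℕ => 1 / ((k : ℝ) + 1)) Filter.atTop (𝓝 0) :=
          tendsto_one_div_add_atTop_nhds_zero_nat
        apply squeeze_zero (fun k => by positivity) (fun k => ?_) h1
        gcongr
        exact_mod_cast hφmono.le_apply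
      exact tendsto_nhds_unique hcont hzero
    have hwball : w ∈ ball (0 : EuclideanSpace ℝ (Fin m)) ρ₀ := by
      have : ‖w‖ ≤ ε₀ := by simpa [dist_zero_right] using hwcb
      simp only [mem_ball, dist_zero_right]
      linarith
    have hw0 : w = 0 := htame ⟨⟨hwclos, hGw⟩, hwball⟩
    have hwge : ε ≤ ‖w‖ := by
      apply ge_of_tendsto (continuous_norm.continuousAt.tendsto.comp htend)
      exact Filter.Eventually.of_forall fun k => hz2 (φ k)
    rw [hw0] at hwge
    simp at hwge
    linarith
  -- assemble the conclusion
  refine ⟨ε₀, hε₀pos, fun ε ε' hε hεε₀ hε' hε'ε₀ => ?_⟩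
  obtain ⟨δ₁, hδ₁, h₁⟩ := claim ε hε hεε₀
  obtain ⟨δ₂, hδ₂, h₂⟩ := claim ε' hε' hε'ε₀
  refine ⟨min δ₁ δ₂, lt_min hδ₁ hδ₂, ?_⟩
  ext y
  constructor
  · rintro ⟨hyim, hyball⟩
    refine ⟨h₂ y (ball_subset_ball (min_le_right δ₁ δ₂) hyball) ?_, hyball⟩
    exact Set.image_mono (f := G) (Set.inter_subset_inter_right U
      (ball_subset_ball hεε₀.le)) hyim
  · rintro ⟨hyim, hyball⟩
    refine ⟨h₁ y (ball_subset_ball (min_le_left δ₁ δ₂) hyball) ?_, hyball⟩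
    exact Set.image_mono (f := G) (Set.inter_subset_inter_right U
      (ball_subset_ball hε'ε₀.le)) hyim
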